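/- Let t > 0 and let g : ℝ → ℝ be a bounded Borel measurable function. Define u(x) := ∫ g(x + y) dγ_t(y), where γ_t denotes the Gaussian probability measure on ℝ with mean 0 and variance t. Then u is differentiable at every x ∈ ℝ, and its derivative is given by u'(x) = ∫ g(x + y)·(y/t) dγ_t(y). -/

import Mathlib

open MeasureTheory ProbabilityTheory Real
open scoped NNReal ENNReal

lemma integral_gaussianReal_eq_mul (t : ℝ≥0) (ht : 0 < t) (f : ℝ → ℝ) :
    ∫ y, f y ∂(gaussianReal 0 t) = ∫ y, gaussianPDFReal 0 t y * f y := by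
  rw [gaussianReal_of_var_ne_zero _ ht.ne']
  have h : gaussianPDF 0 t = fun y => (((gaussianPDFReal 0 t y).toNNReal : ℝ≥0) : ℝ≥0∞) := rfl
  rw [h]
  rw [integral_withDensity_eq_integral_smul
    ((measurable_gaussianPDFReal 0 t).real_toNNReal) f]
  congr 1
  ext y
  simp [NNReal.smul_def, Real.coe_toNNReal _ (gaussianPDFReal_nonneg 0 t y)]

/-- Differentiability of a Gaussian mollification: for bounded measurable `g`,
`x ↦ ∫ g(x+y) dγ_t(y)` is differentiable with derivative
`∫ g(x+y) (y/t) dγ_t(y)`. -/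
theorem gaussian_smoothing_hasDerivAt
    (t : ℝ≥0) (ht : 0 < t)
    (g : ℝ → ℝ) (hg : Measurable g) (hgb : ∃ M : ℝ, ∀ z, |g z| ≤ M) (x : ℝ) :
    HasDerivAt (fun x' : ℝ => ∫ y, g (x' + y) ∂(gaussianReal 0 t))
      (∫ y, g (x + y) * (y / (t : ℝ)) ∂(gaussianReal 0 t)) x := by
  obtain ⟨M, hM⟩ := hgb
  set T : ℝ := (t : ℝ) with hTdef
  have hT : 0 < T := ht
  set c : ℝ := (Real.sqrt (2 * π * T))⁻¹ with hcdef
  have hc : 0 < c := by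
    apply inv_pos.mpr
    apply Real.sqrt_pos.mpr
    positivity
  set φ : ℝ → ℝ := fun w => c * Real.exp (-w ^ 2 / (2 * T)) with hφdef
  have hφeq : gaussianPDFReal 0 t = φ := by
    funext w
    simp only [gaussianPDFReal, sub_zero]
    rfl
  have hφpos : ∀ w, 0 < φ w := fun w => mul_pos hc (Real.exp_pos _)
  have hφcont : Continuous φ := by
    apply continuous_const.mul
    exact (Continuous.div_const ((continuous_pow 2).neg) _).rexp
  have hφint : Integrable φ := hφeq ▸ integrable_gaussianPDFReal 0 t
  set F : ℝ → ℝ → ℝ := fun x' z => φ (z - x') * g z with hFdef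
  set F' : ℝ → ℝ → ℝ := fun x' z => φ (z - x') * g z * ((z - x') / T) with hF'def
  -- rewrite the gaussian integrals as Lebesgue integrals
  have hrw : ∀ x' : ℝ, (∫ y, g (x' + y) ∂(gaussianReal 0 t)) = ∫ z, F x' z := by
    intro x'
    rw [integral_gaussianReal_eq_mul t ht, hφeq,
      ← integral_sub_right_eq_self (fun y => φ y * g (x' + y)) x']
    congr 1
    funext z
    have hz : x' + (z - x') = z := by ring
    simp only [hz]
    rfl
  have hrw' : (∫ y, g (x + y) * (y / T) ∂(gaussianReal 0 t)) = ∫ z, F' x z := by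
    rw [integral_gaussianReal_eq_mul t ht, hφeq,
      ← integral_sub_right_eq_self (fun y => φ y * (g (x + y) * (y / T))) x]
    congr 1
    funext z
    have hz : x + (z - x) = z := by ring
    simp only [hz, F']
    ring
  have hfun : (fun x' : ℝ => ∫ y, g (x' + y) ∂(gaussianReal 0 t)) = fun x' => ∫ z, F x' z :=
    funext hrw
  rw [hfun, hrw']
  have hM0 : 0 ≤ M := le_trans (abs_nonneg _) (hM 0)
  -- measurability facts
  have hφm : ∀ x' : ℝ, Measurable fun z => φ (z - x') := fun x' =>
    hφcont.measurable.comp (measurable_id.sub measurable_const)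
  have hFm : ∀ x' : ℝ, AEStronglyMeasurable (F x') volume := fun x' =>
    ((hφm x').mul hg).aestronglyMeasurable
  have hF'm : AEStronglyMeasurable (F' x) volume := by
    apply Measurable.aestronglyMeasurable
    exact ((hφm x).mul hg).mul ((measurable_id.sub measurable_const).div_const T)
  -- integrability of F x
  have hFint : Integrable (F x) volume := by
    apply Integrable.mono' ((hφint.comp_sub_right x).const_mul M) (hFm x)
    filter_upwards with z
    rw [Real.norm_eq_abs, hFdef]
    simp only
    rw [abs_mul, abs_of_pos (hφpos _)]
    calc φ (z - x) * |g z| ≤ φ (z - x) * M := by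
          exact mul_le_mul_of_nonneg_left (hM z) (hφpos _).le
      _ = M * φ (z - x) := by ring
  -- the dominating bound
  set bound : ℝ → ℝ := fun z =>
    M / T * (c * Real.exp (1 / (2 * T)) * ((|z - x| + 1) * Real.exp (-(z - x) ^ 2 / (4 * T))))
    with hbounddef
  have hboundint : Integrable bound := by
    have h1 : Integrable (fun w : ℝ => Real.exp (-(1 / (4 * T)) * w ^ 2)) :=
      integrable_exp_neg_mul_sq (by positivity)
    have h2 : Integrable (fun w : ℝ => w * Real.exp (-(1 / (4 * T)) * w ^ 2)) := by
      have := integrable_rpow_mul_exp_neg_mul_sq (b := 1 / (4 * T)) (by positivity)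
        (s := 1) (by norm_num)
      simpa using this
    have h3 : Integrable (fun w : ℝ => (|w| + 1) * Real.exp (-(1 / (4 * T)) * w ^ 2)) := by
      have h2' := h2.abs
      have : (fun w : ℝ => |w * Real.exp (-(1 / (4 * T)) * w ^ 2)|)
          = fun w : ℝ => |w| * Real.exp (-(1 / (4 * T)) * w ^ 2) := by
        funext w
        rw [abs_mul, abs_of_pos (Real.exp_pos _)]
      rw [this] at h2'
      have := h2'.add h1
      refine this.congr (Filter.Eventually.of_forall fun w => ?_)
      simp only [Pi.add_apply]
      ring
    have h4 : (fun w : ℝ => (|w| + 1) * Real.exp (-w ^ 2 / (4 * T)))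
        = fun w : ℝ => (|w| + 1) * Real.exp (-(1 / (4 * T)) * w ^ 2) := by
      funext w
      congr 1
      congr 1
      field_simp
    have h5 : Integrable (fun z : ℝ => (|z - x| + 1) * Real.exp (-(z - x) ^ 2 / (4 * T))) := by
      have := (h4 ▸ h3).comp_sub_right x
      exact this
    exact (h5.const_mul _).const_mul _
  have h_bound : ∀ᵐ z : ℝ, ∀ x' ∈ Metric.ball x 1, ‖F' x' z‖ ≤ bound z := by
    filter_upwards with z
    intro x' hx'
    rw [Metric.mem_ball, Real.dist_eq] at hx'
    rw [Real.norm_eq_abs, hF'def]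
    simp only
    rw [abs_mul, abs_mul, abs_of_pos (hφpos _), abs_div, abs_of_pos hT]
    -- key estimates
    have habs : |z - x'| ≤ |z - x| + 1 := by
      calc |z - x'| = |(z - x) - (x' - x)| := by ring_nf
        _ ≤ |z - x| + |x' - x| := abs_sub _ _
        _ ≤ |z - x| + 1 := by linarith
    have hsq : (z - x) ^ 2 / 2 - 1 ≤ (z - x') ^ 2 := by
      nlinarith [sq_nonneg ((z - x) - 2 * (x' - x)), abs_nonneg (x' - x),
        sq_abs (x' - x), hx'.le, abs_nonneg (x' - x)]
    have hexp : Real.exp (-(z - x') ^ 2 / (2 * T)) ≤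
        Real.exp (1 / (2 * T)) * Real.exp (-(z - x) ^ 2 / (4 * T)) := by
      rw [← Real.exp_add]
      apply Real.exp_le_exp.mpr
      have heq : 1 / (2 * T) + -(z - x) ^ 2 / (4 * T) = (1 - (z - x)^2 / 2) / (2 * T) := by
        field_simp
        ring
      rw [heq]
      gcongr
      linarith
    calc φ (z - x') * |g z| * (|z - x'| / T)
        ≤ (c * (Real.exp (1 / (2 * T)) * Real.exp (-(z - x) ^ 2 / (4 * T)))) * M
          * ((|z - x| + 1) / T) := by
          apply mul_le_mul
          · apply mul_le_mul
            · rw [hφdef]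
              simp only
              exact mul_le_mul_of_nonneg_left hexp hc.le
            · exact hM z
            · exact abs_nonneg _
            · positivity
          · gcongr
          · positivity
          · positivity
      _ = bound z := by rw [hbounddef]; ring
  have h_diff : ∀ᵐ z : ℝ, ∀ x' ∈ Metric.ball x 1,
      HasDerivAt (fun x'' => F x'' z) (F' x' z) x' := by
    filter_upwards with z
    intro x' _
    have h1 : HasDerivAt (fun x'' : ℝ => z - x'') (-1) x' := by
      simpa using (hasDerivAt_id x').const_sub z
    have h2 : HasDerivAt (fun x'' : ℝ => -(z - x'') ^ 2 / (2 * T))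
        ((z - x') / T) x' := by
      have := ((h1.pow 2).neg).div_const (2 * T)
      refine HasDerivAt.congr_deriv this ?_
      simp only [Nat.reduceSub, pow_one]
      rw [div_eq_div_iff (by positivity) hT.ne']
      ring
    have h3 : HasDerivAt (fun x'' : ℝ => Real.exp (-(z - x'') ^ 2 / (2 * T)))
        (Real.exp (-(z - x') ^ 2 / (2 * T)) * ((z - x') / T)) x' := h2.exp
    have h4 := (h3.const_mul c).mul_const (g z)
    refine HasDerivAt.congr_deriv h4 ?_
    rw [hF'def, hφdef]
    simp only
    ring
  exact (hasDerivAt_integral_of_dominated_loc_of_deriv_le (Metric.ball_mem_nhds x one_pos)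
    (Filter.Eventually.of_forall hFm) hFint hF'm h_bound hboundint h_diff).2
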